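/- Let N ≥ 2 and K ≥ 1, and let (w, P) be a configuration with confidence e whose induced marginal on the N classes is uniform, i.e., ∑_{k ∈ Fin K} w k · P k i = 1/N for every i ∈ Fin N. Then log N − ∑_{k ∈ Fin K} w k · ∑_{i ∈ Fin N} (−P k i · log (P k i)) ≤ log (N·e), where log is the natural logarithm and 0·log 0 is interpreted as 0. (The Boyd–Chiang upper bound on channel capacity for uniform inputs, derived in the paper's Remark 4 and Appendix E as a consequence of Theorem 4: the mutual information I(X;Z) = H(X) − H(X|Z) is at most log of the sum over outputs of the largest column entry of the channel matrix.) -/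
import Mathlib


open Finset

/-- The maximum of a real-valued vector over the finite index set `Fin N` (`N > 0`). -/
noncomputable def colMax {N : ℕ} (hN : 0 < N) (v : Fin N → ℝ) : ℝ :=
  Finset.univ.sup' (Finset.univ_nonempty_iff.mpr ⟨⟨0, hN⟩⟩) v

/-- The Boyd–Chiang upper bound on channel capacity for uniform inputs (paper's
Remark 4 and Appendix E): if the induced marginal on the `N` classes is uniform,
then `log N - H(X|Z) ≤ log (N * e)` where `e` is the confidence. -/
theorem boyd_chiang_bound (N K : ℕ) (hN : 2 ≤ N) (hK : 1 ≤ K)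
    (w : Fin K → ℝ) (hw : ∀ k, 0 ≤ w k) (hws : ∑ k, w k = 1)
    (P : Fin K → Fin N → ℝ) (hP : ∀ k i, 0 ≤ P k i) (hPs : ∀ k, ∑ i, P k i = 1)
    (huniform : ∀ i, ∑ k, w k * P k i = 1 / (N : ℝ))
    (e : ℝ) (he : e = ∑ k, w k * colMax (by omega) (P k)) :
    Real.log N - ∑ k, w k * ∑ i, Real.negMulLog (P k i) ≤ Real.log ((N : ℝ) * e) := by
  have hN0 : 0 < N := by omega
  set m : Fin K → ℝ := fun k => colMax hN0 (P k) with hmdef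
  have hle : ∀ k i, P k i ≤ m k := fun k i => Finset.le_sup' (P k) (Finset.mem_univ i)
  have hNpos : (0:ℝ) < N := by exact_mod_cast hN0
  have hmlb : ∀ k, 1 / (N:ℝ) ≤ m k := by
    intro k
    rw [div_le_iff₀ hNpos, mul_comm]
    calc (1:ℝ) = ∑ i, P k i := (hPs k).symm
      _ ≤ ∑ _i : Fin N, m k := Finset.sum_le_sum fun i _ => hle k i
      _ = N * m k := by rw [Finset.sum_const, Finset.card_univ, Fintype.card_fin, nsmul_eq_mul]
  have hmpos : ∀ k, 0 < m k := fun k => lt_of_lt_of_le (by positivity) (hmlb k)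
  have hepos : 0 < e := by
    rw [he]
    have : (0:ℝ) < 1 / N := by positivity
    calc (0:ℝ) < 1 / N := this
      _ = ∑ k, w k * (1 / (N:ℝ)) := by rw [← Finset.sum_mul, hws, one_mul]
      _ ≤ ∑ k, w k * m k := Finset.sum_le_sum fun k _ =>
          mul_le_mul_of_nonneg_left (hmlb k) (hw k)
  -- Step A: -log (m k) ≤ ∑ i, negMulLog (P k i)
  have hA : ∀ k, -Real.log (m k) ≤ ∑ i, Real.negMulLog (P k i) := by
    intro k
    have : ∑ i, (-(P k i * Real.log (m k))) ≤ ∑ i, Real.negMulLog (P k i) := by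
      refine Finset.sum_le_sum fun i _ => ?_
      rcases eq_or_lt_of_le (hP k i) with h | h
      · simp [Real.negMulLog, ← h]
      · have hlog : Real.log (P k i) ≤ Real.log (m k) := Real.log_le_log h (hle k i)
        have := mul_le_mul_of_nonneg_left hlog (le_of_lt h)
        rw [Real.negMulLog]
        linarith
    calc -Real.log (m k) = ∑ i, (-(P k i * Real.log (m k))) := by
            rw [Finset.sum_neg_distrib, ← Finset.sum_mul, hPs k, one_mul]
      _ ≤ _ := this
  -- Step B: log (m k) ≤ log e + m k / e - 1
  have hB : ∀ k, Real.log (m k) ≤ Real.log e + m k / e - 1 := by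
    intro k
    have h1 : Real.log (m k / e) ≤ m k / e - 1 :=
      Real.log_le_sub_one_of_pos (div_pos (hmpos k) hepos)
    rw [Real.log_div (ne_of_gt (hmpos k)) (ne_of_gt hepos)] at h1
    linarith
  have key : -∑ k, w k * ∑ i, Real.negMulLog (P k i) ≤ Real.log e := by
    calc -∑ k, w k * ∑ i, Real.negMulLog (P k i)
        = ∑ k, w k * (-(∑ i, Real.negMulLog (P k i))) := by
          rw [← Finset.sum_neg_distrib]; congr 1; ext k; ring
      _ ≤ ∑ k, w k * Real.log (m k) := Finset.sum_le_sum fun k _ =>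
          mul_le_mul_of_nonneg_left (by linarith [hA k]) (hw k)
      _ ≤ ∑ k, w k * (Real.log e + m k / e - 1) := Finset.sum_le_sum fun k _ =>
          mul_le_mul_of_nonneg_left (hB k) (hw k)
      _ = Real.log e + (∑ k, w k * m k) / e - 1 := by
          simp only [mul_sub, mul_add, Finset.sum_sub_distrib, Finset.sum_add_distrib,
            ← Finset.sum_mul, hws, one_mul, Finset.sum_div]
          congr 1
          · congr 1
            exact Finset.sum_congr rfl fun k _ => by ring
      _ = Real.log e := by rw [← he, div_self (ne_of_gt hepos)]; ring
  rw [Real.log_mul (ne_of_gt hNpos) (ne_of_gt hepos)]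
  linarith
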